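/- Assume F : ℝ^n ⇒ ℝ^n is graphically Lipschitzian of dimension n at (x̄, ȳ) ∈ gph F with transformation mapping Φ and associated Lipschitz continuous mapping f : U → ℝ^n. Then F has the SCD property around (x̄, ȳ), and for every (x, y) ∈ gph F sufficiently close to (x̄, ȳ) one has Sp F(x, y) = {rge[∇Φ(x, y)^{-1}(I; B)] : B ∈ ∇̄f(u)} and Sp* F(x, y) = {rge[S_n ∇Φ(x, y)ᵀ S_nᵀ (I; Bᵀ)] : B ∈ ∇̄f(u)}, where u := π₁(Φ(x, y)), (I; B) denotes the (2n)×n matrix whose upper n×n block is the identity and whose lower block is B, rge denotes the range (column space), and S_n denotes the (2n)×(2n) block matrix [[0, −I], [I, 0]]. -/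

import Mathlib

open Filter Topology Metric Set
open scoped InnerProductSpace RealInnerProductSpace ENNReal NNReal

noncomputable section

namespace SCD

abbrev E (n : ℕ) := EuclideanSpace ℝ (Fin n)
abbrev E2 (n : ℕ) := WithLp 2 (E n × E n)

variable {n : ℕ}

def lp2 (n : ℕ) : E2 n ≃ₗ[ℝ] E n × E n := WithLp.linearEquiv 2 ℝ (E n × E n)
def mk2 (u v : E n) : E2 n := (lp2 n).symm (u, v)
def fst2 (z : E2 n) : E n := (lp2 n z).1
def snd2 (z : E2 n) : E n := (lp2 n z).2

instance : FiniteDimensional ℝ (E2 n) := Module.Finite.equiv (lp2 n).symm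

def tcone {H : Type*} [NormedAddCommGroup H] [NormedSpace ℝ H] (A : Set H) (z : H) : Set H :=
  {w | ∃ t : ℕ → ℝ, ∃ wk : ℕ → H, (∀ k, 0 < t k) ∧ Tendsto t atTop (𝓝 0) ∧
      Tendsto wk atTop (𝓝 w) ∧ ∀ k, z + t k • wk k ∈ A}

def gph (F : E n → Set (E n)) : Set (E2 n) := {z | snd2 z ∈ F (fst2 z)}
def projC (L : Submodule ℝ (E2 n)) : E2 n →L[ℝ] E2 n := L.subtypeL.comp (L.orthogonalProjectionOnto)
def dZ (L₁ L₂ : Submodule ℝ (E2 n)) : ℝ := ‖projC L₁ - projC L₂‖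

def Sneg (n : ℕ) : E2 n ≃ₗ[ℝ] E2 n :=
  (lp2 n).trans (((LinearEquiv.prodComm ℝ (E n) (E n)).trans
    ((LinearEquiv.neg ℝ).prodCongr (LinearEquiv.refl ℝ (E n)))).trans (lp2 n).symm)

def adjS (L : Submodule ℝ (E2 n)) : Submodule ℝ (E2 n) := Lᗮ.map (Sneg n).toLinearMap

/-- `O_F`: the set of points of `gph F` where `F` is graphically smooth of dimension `n`,
i.e. the tangent cone to the graph is an `n`-dimensional linear subspace. -/
def OF (F : E n → Set (E n)) : Set (E2 n) :=
  {z | z ∈ gph F ∧ ∃ L : Submodule ℝ (E2 n),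
    Module.finrank ℝ L = n ∧ (L : Set (E2 n)) = tcone (gph F) z}

/-- The primal generalized derivative `Sp F(x,y)`. -/
def Sp (F : E n → Set (E n)) (z : E2 n) : Set (Submodule ℝ (E2 n)) :=
  {L | Module.finrank ℝ L = n ∧ ∃ (zk : ℕ → E2 n) (Lk : ℕ → Submodule ℝ (E2 n)),
      (∀ k, zk k ∈ gph F ∧ Module.finrank ℝ (Lk k) = n ∧
        ((Lk k : Set (E2 n)) = tcone (gph F) (zk k))) ∧
      Tendsto zk atTop (𝓝 z) ∧ Tendsto (fun k => dZ (Lk k) L) atTop (𝓝 0)}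

/-- The dual generalized derivative `Sp* F(x,y)`. -/
def SpStar (F : E n → Set (E n)) (z : E2 n) : Set (Submodule ℝ (E2 n)) :=
  {L' | ∃ L ∈ Sp F z, L' = adjS L}

/-- `F` has the SCD property at `z ∈ gph F`. -/
def SCDAt (F : E n → Set (E n)) (z : E2 n) : Prop := (Sp F z).Nonempty

/-- `F` has the SCD property around `z ∈ gph F`. -/
def SCDAround (F : E n → Set (E n)) (z : E2 n) : Prop :=
  ∃ δ > (0 : ℝ), ∀ z' ∈ gph F, dist z' z < δ → SCDAt F z'

/-- `Z_n^{reg}`: the subspaces `L ∈ Z_n` such that `(y*, 0) ∈ L` implies `y* = 0`. -/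
def Znreg (n : ℕ) : Set (Submodule ℝ (E2 n)) :=
  {L | Module.finrank ℝ L = n ∧ ∀ y : E n, mk2 y 0 ∈ L → y = 0}

/-- `F` is SCD regular around `z ∈ gph F`. -/
def SCDRegularAround (F : E n → Set (E n)) (z : E2 n) : Prop :=
  SCDAround F z ∧ ∀ L ∈ SpStar F z, L ∈ Znreg n

/-- The set of values `‖y*‖` for `(y*, x*)` in some `L ∈ Sp* F(x,y)` with `‖x*‖ ≤ 1`;
its supremum is the modulus of SCD regularity. -/
def scdregSet (F : E n → Set (E n)) (z : E2 n) : Set ℝ :=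
  {r | ∃ L ∈ SpStar F z, ∃ w : E2 n, w ∈ L ∧ ‖snd2 w‖ ≤ 1 ∧ r = ‖fst2 w‖}

/-- The modulus of SCD regularity `scd reg F(x,y)`. -/
def scdreg (F : E n → Set (E n)) (z : E2 n) : ℝ := sSup (scdregSet F z)

/-- The graph of the outer limiting graphical derivative `D^♯F(x̄,ȳ)`. -/
def DsharpG (F : E n → Set (E n)) (z : E2 n) : Set (E2 n) :=
  {w | ∃ (zk : ℕ → E2 n) (wk : ℕ → E2 n),
    (∀ k, zk k ∈ gph F ∧ wk k ∈ tcone (gph F) (zk k)) ∧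
    Tendsto zk atTop (𝓝 z) ∧ Tendsto wk atTop (𝓝 w)}

/-- The regular (Fréchet) normal cone: the polar of the tangent cone. -/
def regN (A : Set (E2 n)) (z : E2 n) : Set (E2 n) := {w | ∀ v ∈ tcone A z, ⟪w, v⟫_ℝ ≤ 0}

/-- The limiting (Mordukhovich) normal cone. -/
def limN (A : Set (E2 n)) (z : E2 n) : Set (E2 n) :=
  {w | ∃ (zk wk : ℕ → E2 n), (∀ k, zk k ∈ A ∧ wk k ∈ regN A (zk k)) ∧
    Tendsto zk atTop (𝓝 z) ∧ Tendsto wk atTop (𝓝 w)}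

/-- The graph of the limiting coderivative: `(y*, x*)` with `(x*, -y*)` in the limiting
normal cone to the graph. -/
def coderivG (F : E n → Set (E n)) (z : E2 n) : Set (E2 n) :=
  {w | mk2 (snd2 w) (-(fst2 w)) ∈ limN (gph F) z}

/-- The graph of the strict (paratingent) derivative `D_*F(x̄,ȳ)`. -/
def paraconeG (F : E n → Set (E n)) (z : E2 n) : Set (E2 n) :=
  {w | ∃ (t : ℕ → ℝ) (z1 z2 : ℕ → E2 n), (∀ k, 0 < t k) ∧ Tendsto t atTop (𝓝 0) ∧
    (∀ k, z1 k ∈ gph F ∧ z2 k ∈ gph F) ∧ Tendsto z1 atTop (𝓝 z) ∧ Tendsto z2 atTop (𝓝 z) ∧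
    Tendsto (fun k => (t k)⁻¹ • (z2 k - z1 k)) atTop (𝓝 w)}

/-- The B-subdifferential of `f : U → ℝ^n` at `x`. -/
def Bsub (f : E n → E n) (U : Set (E n)) (x : E n) : Set (E n →L[ℝ] E n) :=
  {A | ∃ xk : ℕ → E n, (∀ k, xk k ∈ U ∧ DifferentiableAt ℝ f (xk k)) ∧
    Tendsto xk atTop (𝓝 x) ∧ Tendsto (fun k => fderiv ℝ f (xk k)) atTop (𝓝 A)}

/-- A single-valued map `f` on `U` viewed as a set-valued map. -/
def sv (f : E n → E n) (U : Set (E n)) : E n → Set (E n) := fun x => {y | x ∈ U ∧ y = f x}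

/-- The linear map `u ↦ (u, A u)`. -/
def graphMap (A : E n →L[ℝ] E n) : E n →ₗ[ℝ] E2 n :=
  (lp2 n).symm.toLinearMap.comp (LinearMap.prod LinearMap.id A.toLinearMap)

/-- The subspace `rge(I, A) = {(u, Au) : u ∈ ℝ^n}`. -/
def rgeIA (A : E n →L[ℝ] E n) : Submodule ℝ (E2 n) := LinearMap.range (graphMap A)

/-- The linear map `p ↦ (C p, p)`. -/
def graphMapRev (C : E n →L[ℝ] E n) : E n →ₗ[ℝ] E2 n :=
  (lp2 n).symm.toLinearMap.comp (LinearMap.prod C.toLinearMap LinearMap.id)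

/-- The subspace `rge(C, I) = {(C p, p) : p ∈ ℝ^n}`. -/
def rgeCI (C : E n →L[ℝ] E n) : Submodule ℝ (E2 n) := LinearMap.range (graphMapRev C)

/-- The preimage map `F^{-1}(y)`. -/
def Finv (F : E n → Set (E n)) (y : E n) : Set (E n) := {x | y ∈ F x}

/-- Metric subregularity at `z ∈ gph F` with constant `κ`. -/
def SubregWith (F : E n → Set (E n)) (z : E2 n) (κ : ℝ) : Prop :=
  ∃ δ > (0 : ℝ), ∀ x' : E n, dist x' (fst2 z) < δ →
    EMetric.infEdist x' (Finv F (snd2 z)) ≤ ENNReal.ofReal κ * EMetric.infEdist (snd2 z) (F x')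

/-- `F` is metrically subregular at `z ∈ gph F`. -/
def SubregAt (F : E n → Set (E n)) (z : E2 n) : Prop := ∃ κ, 0 ≤ κ ∧ SubregWith F z κ

/-- The modulus of metric subregularity `subreg F(x,y)`. -/
def subregMod (F : E n → Set (E n)) (z : E2 n) : ℝ := sInf {κ | 0 ≤ κ ∧ SubregWith F z κ}

/-- `F` is strongly metrically subregular at `z ∈ gph F`. -/
def StrSubregAt (F : E n → Set (E n)) (z : E2 n) : Prop :=
  SubregAt F z ∧ ∃ δ > (0 : ℝ), ∀ x' ∈ Finv F (snd2 z), dist x' (fst2 z) < δ → x' = fst2 z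

/-- `F` is strongly metrically subregular around `zb ∈ gph F` (with finite `lsubreg`). -/
def StrSubregAround (F : E n → Set (E n)) (zb : E2 n) : Prop :=
  ∃ δ > (0 : ℝ), (∀ z ∈ gph F, dist z zb < δ → StrSubregAt F z) ∧
    ∃ c : ℝ, ∀ z ∈ gph F, dist z zb < δ → subregMod F z ≤ c

/-- `lsubreg F(x̄,ȳ)`: the limsup of `subreg F(x,y)` over graph points `(x,y) → (x̄,ȳ)`. -/
def lsubreg (F : E n → Set (E n)) (zb : E2 n) : ℝ :=
  Filter.limsup (fun z => subregMod F z) (𝓝[gph F] zb)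

/-- Metric regularity around `zb ∈ gph F` with constant `κ`. -/
def RegWith (F : E n → Set (E n)) (zb : E2 n) (κ : ℝ) : Prop :=
  ∃ δ > (0 : ℝ), ∀ x y : E n, dist x (fst2 zb) < δ → dist y (snd2 zb) < δ →
    EMetric.infEdist x (Finv F y) ≤ ENNReal.ofReal κ * EMetric.infEdist y (F x)

/-- `F` is metrically regular around `zb ∈ gph F`. -/
def MetrRegAround (F : E n → Set (E n)) (zb : E2 n) : Prop := ∃ κ, 0 ≤ κ ∧ RegWith F zb κ

/-- The modulus of metric regularity `reg F(x̄,ȳ)`. -/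
def regMod (F : E n → Set (E n)) (zb : E2 n) : ℝ := sInf {κ | 0 ≤ κ ∧ RegWith F zb κ}

/-- `F` is strongly metrically regular around `zb ∈ gph F`: metrically regular and `F⁻¹`
has a single-valued localization around `(ȳ, x̄)`. -/
def StrRegAround (F : E n → Set (E n)) (zb : E2 n) : Prop :=
  MetrRegAround F zb ∧
  ∃ (X' Y' : Set (E n)) (h : E n → E n), IsOpen X' ∧ IsOpen Y' ∧
    fst2 zb ∈ X' ∧ snd2 zb ∈ Y' ∧ h (snd2 zb) = fst2 zb ∧
    gph F ∩ {w | fst2 w ∈ X' ∧ snd2 w ∈ Y'} = {w | snd2 w ∈ Y' ∧ fst2 w = h (snd2 w)}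

/-- `F` is SCD semismooth* at `zb ∈ gph F`. -/
def SCDSemismoothAt (F : E n → Set (E n)) (zb : E2 n) : Prop :=
  SCDAround F zb ∧ ∀ ε > (0 : ℝ), ∃ δ > (0 : ℝ), ∀ z ∈ gph F, dist z zb ≤ δ →
    ∀ L ∈ SpStar F z, ∀ w : E2 n, w ∈ L →
      |⟪snd2 w, fst2 z - fst2 zb⟫_ℝ - ⟪fst2 w, snd2 z - snd2 zb⟫_ℝ| ≤ ε * ‖z - zb‖ * ‖w‖

/-- `F` is graphically Lipschitzian of dimension `n` at `zb` with transformation mapping `Φ`,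
local inverse `Ψ`, neighborhood `W`, and `K`-Lipschitz map `f : U → ℝ^n`. -/
def GraphLipWith (F : E n → Set (E n)) (zb : E2 n) (Φ Ψ : E2 n → E2 n)
    (W : Set (E2 n)) (U : Set (E n)) (f : E n → E n) (K : ℝ≥0) : Prop :=
  IsOpen W ∧ zb ∈ W ∧ ContDiffOn ℝ 1 Φ W ∧ Set.InjOn Φ W ∧ IsOpen (Φ '' W) ∧
  ContDiffOn ℝ 1 Ψ (Φ '' W) ∧ Set.LeftInvOn Ψ Φ W ∧
  IsOpen U ∧ LipschitzOnWith K f U ∧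
  Φ '' (gph F ∩ W) = {w | fst2 w ∈ U ∧ snd2 w = f (fst2 w)}

/-- `F` is graphically Lipschitzian of dimension `n` at `zb` with transformation mapping `Φ`. -/
def GraphLipAt (F : E n → Set (E n)) (zb : E2 n) (Φ : E2 n → E2 n) : Prop :=
  ∃ Ψ W U f K, GraphLipWith F zb Φ Ψ W U f K

/-- `∇̄^Φ F(x̄,ȳ)`: the `(2n)×n` matrices `Z` (as linear maps `ℝ^n → ℝ^{2n}`) with
`rge Z ∈ Sp F(x̄,ȳ)` and upper block of `∇Φ(x̄,ȳ)Z` equal to the identity. -/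
def BsubPhi (F : E n → Set (E n)) (zb : E2 n) (Φ : E2 n → E2 n) : Set (E n →L[ℝ] E2 n) :=
  {Z | LinearMap.range (Z : E n →ₗ[ℝ] E2 n) ∈ Sp F zb ∧ ∀ p, fst2 (fderiv ℝ Φ zb (Z p)) = p}

/-- A (globally) monotone set-valued map. -/
def MonoMap (T : E n → Set (E n)) : Prop :=
  ∀ x₁ y₁ x₂ y₂, y₁ ∈ T x₁ → y₂ ∈ T x₂ → 0 ≤ ⟪y₁ - y₂, x₁ - x₂⟫_ℝ

/-- `F` is locally maximally monotone at `z ∈ gph F`. -/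
def LocMaxMonoAt (F : E n → Set (E n)) (z : E2 n) : Prop :=
  ∃ X Y : Set (E n), IsOpen X ∧ IsOpen Y ∧ fst2 z ∈ X ∧ snd2 z ∈ Y ∧
    (∀ w₁ ∈ gph F ∩ {w | fst2 w ∈ X ∧ snd2 w ∈ Y},
     ∀ w₂ ∈ gph F ∩ {w | fst2 w ∈ X ∧ snd2 w ∈ Y},
       0 ≤ ⟪snd2 w₁ - snd2 w₂, fst2 w₁ - fst2 w₂⟫_ℝ) ∧
    ∀ T : E n → Set (E n), MonoMap T →
      gph F ∩ {w | fst2 w ∈ X ∧ snd2 w ∈ Y} ⊆ gph T →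
      gph F ∩ {w | fst2 w ∈ X ∧ snd2 w ∈ Y} = gph T ∩ {w | fst2 w ∈ X ∧ snd2 w ∈ Y}

/-- `F` is locally maximally hypomonotone at `z ∈ gph F`:
`γI + F` is locally maximally monotone at `(x, γx + y)` for some `γ ≥ 0`. -/
def LocMaxHypoAt (F : E n → Set (E n)) (z : E2 n) : Prop :=
  ∃ γ : ℝ, 0 ≤ γ ∧ LocMaxMonoAt (fun x => (fun y => γ • x + y) '' F x)
    (mk2 (fst2 z) (γ • fst2 z + snd2 z))

/-- A firmly nonexpansive matrix: `⟨Bv, v⟩ ≥ ‖Bv‖²` for all `v`. -/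
def FirmNonexp (B : E n →L[ℝ] E n) : Prop := ∀ v, ‖B v‖ ^ 2 ≤ ⟪B v, v⟫_ℝ


section A1
variable {n : ℕ}

@[simp] lemma fst2_mk2 (u v : E n) : fst2 (mk2 u v) = u := rfl
@[simp] lemma snd2_mk2 (u v : E n) : snd2 (mk2 u v) = v := rfl
@[simp] lemma mk2_fst2_snd2 (z : E2 n) : mk2 (fst2 z) (snd2 z) = z := rfl

lemma continuous_fst2 : Continuous (fst2 : E2 n → E n) :=
  (continuous_fst.comp (WithLp.prodContinuousLinearEquiv 2 ℝ (E n) (E n)).continuous)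

lemma continuous_snd2 : Continuous (snd2 : E2 n → E n) :=
  (continuous_snd.comp (WithLp.prodContinuousLinearEquiv 2 ℝ (E n) (E n)).continuous)

lemma continuous_mk2 : Continuous (fun p : E n × E n => mk2 p.1 p.2) :=
  (WithLp.prodContinuousLinearEquiv 2 ℝ (E n) (E n)).symm.continuous

lemma inner_e2 (z w : E2 n) : ⟪z, w⟫_ℝ = ⟪fst2 z, fst2 w⟫_ℝ + ⟪snd2 z, snd2 w⟫_ℝ :=
  WithLp.prod_inner_apply z w

end A1

section A2
variable {H : Type*} [NormedAddCommGroup H] [NormedSpace ℝ H]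
variable {H' : Type*} [NormedAddCommGroup H'] [NormedSpace ℝ H']

lemma tendsto_base {z w : H} {t : ℕ → ℝ} {wk : ℕ → H} (ht0 : Tendsto t atTop (𝓝 0))
    (hw : Tendsto wk atTop (𝓝 w)) : Tendsto (fun k => z + t k • wk k) atTop (𝓝 z) := by
  have h : Tendsto (fun k => t k • wk k) atTop (𝓝 ((0:ℝ) • w)) := ht0.smul hw
  simpa using tendsto_const_nhds.add h

lemma mem_tcone_of_eventually {A : Set H} {z w : H} (t : ℕ → ℝ) (wk : ℕ → H)
    (ht : ∀ k, 0 < t k) (ht0 : Tendsto t atTop (𝓝 0)) (hw : Tendsto wk atTop (𝓝 w))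
    (hmem : ∀ᶠ k in atTop, z + t k • wk k ∈ A) : w ∈ tcone A z := by
  obtain ⟨N, hN⟩ := eventually_atTop.1 hmem
  exact ⟨fun k => t (k + N), fun k => wk (k + N), fun k => ht _,
    ht0.comp (tendsto_add_atTop_nat N), hw.comp (tendsto_add_atTop_nat N),
    fun k => hN _ (Nat.le_add_left N k)⟩

lemma tcone_inter_open {A W : Set H} (hW : IsOpen W) {z : H} (hz : z ∈ W) :
    tcone (A ∩ W) z = tcone A z := by
  ext w; constructor
  · rintro ⟨t, wk, ht, ht0, hw, hmem⟩; exact ⟨t, wk, ht, ht0, hw, fun k => (hmem k).1⟩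
  · rintro ⟨t, wk, ht, ht0, hw, hmem⟩
    refine mem_tcone_of_eventually t wk ht ht0 hw ?_
    filter_upwards [(tendsto_base ht0 hw).eventually (hW.eventually_mem hz)] with k hk
    exact ⟨hmem k, hk⟩

/-- Difference quotients along a sequence converge to the derivative. -/
lemma tendsto_quot {Φ : H → H'} {z : H} {Df : H →L[ℝ] H'} (hΦ : HasFDerivAt Φ Df z)
    {t : ℕ → ℝ} {wk : ℕ → H} {w : H} (ht : ∀ k, 0 < t k) (ht0 : Tendsto t atTop (𝓝 0))
    (hw : Tendsto wk atTop (𝓝 w)) :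
    Tendsto (fun k => (t k)⁻¹ • (Φ (z + t k • wk k) - Φ z)) atTop (𝓝 (Df w)) := by
  set x : ℕ → H := fun k => z + t k • wk k with hx
  have hxz : Tendsto x atTop (𝓝 z) := tendsto_base ht0 hw
  have hlo : (fun k => Φ (x k) - Φ z - Df (x k - z)) =o[atTop] fun k => x k - z :=
    (hΦ.isLittleO).comp_tendsto hxz
  have hxzsub : ∀ k, x k - z = t k • wk k := fun k => by simp [hx]
  have hbO : (fun k => x k - z) =O[atTop] t := by
    obtain ⟨C, hC⟩ := hw.norm.bddAbove_range.imp (fun C hC => hC)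
    refine Asymptotics.isBigO_iff.2 ⟨C, Filter.Eventually.of_forall fun k => ?_⟩
    have : ‖x k - z‖ = t k * ‖wk k‖ := by
      rw [hxzsub k, norm_smul, Real.norm_eq_abs, abs_of_pos (ht k)]
    rw [this, Real.norm_eq_abs, abs_of_pos (ht k), mul_comm]
    exact mul_le_mul_of_nonneg_right (hC ⟨k, rfl⟩) (ht k).le
  have hlot : (fun k => Φ (x k) - Φ z - Df (x k - z)) =o[atTop] t := hlo.trans_isBigO hbO
  have hnorm : Tendsto (fun k => ‖Φ (x k) - Φ z - Df (x k - z)‖ / t k) atTop (𝓝 0) := by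
    have := hlot.norm_norm
    rw [Asymptotics.isLittleO_iff_tendsto (fun k hk => absurd hk (by
      simpa [Real.norm_eq_abs, abs_of_pos (ht k)] using (ht k).ne'))] at this
    · refine this.congr fun k => by rw [Real.norm_eq_abs, abs_of_pos (ht k)]
  have hrem : Tendsto (fun k => (t k)⁻¹ • (Φ (x k) - Φ z - Df (x k - z))) atTop (𝓝 0) := by
    rw [tendsto_zero_iff_norm_tendsto_zero]
    refine hnorm.congr fun k => ?_
    rw [norm_smul, norm_inv, Real.norm_eq_abs, abs_of_pos (ht k), inv_mul_eq_div]
  have hmain : ∀ k, (t k)⁻¹ • (Φ (x k) - Φ z) =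
      Df (wk k) + (t k)⁻¹ • (Φ (x k) - Φ z - Df (x k - z)) := by
    intro k
    rw [hxzsub k, map_smul]
    rw [smul_sub, smul_sub, smul_smul, inv_mul_cancel₀ (ht k).ne', one_smul]
    module
  have hDf : Tendsto (fun k => Df (wk k)) atTop (𝓝 (Df w)) := (Df.continuous.tendsto w).comp hw
  have := hDf.add hrem
  rw [add_zero] at this
  exact Tendsto.congr (fun k => (hmain k).symm) this

lemma fderiv_mem_tcone_image {Φ : H → H'} {S : Set H} {z : H} {Df : H →L[ℝ] H'}
    (hΦ : HasFDerivAt Φ Df z) {w : H} (hw : w ∈ tcone S z) : Df w ∈ tcone (Φ '' S) (Φ z) := by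
  obtain ⟨t, wk, ht, ht0, hwk, hmem⟩ := hw
  refine ⟨t, fun k => (t k)⁻¹ • (Φ (z + t k • wk k) - Φ z), ht, ht0,
    tendsto_quot hΦ ht ht0 hwk, fun k => ⟨z + t k • wk k, hmem k, ?_⟩⟩
  rw [smul_smul, mul_inv_cancel₀ (ht k).ne', one_smul]; abel

end A2

section A3
variable {n : ℕ}

@[simp] lemma fst2_add (a b : E2 n) : fst2 (a + b) = fst2 a + fst2 b := rfl
@[simp] lemma snd2_add (a b : E2 n) : snd2 (a + b) = snd2 a + snd2 b := rfl
@[simp] lemma fst2_smul (t : ℝ) (a : E2 n) : fst2 (t • a) = t • fst2 a := rfl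
@[simp] lemma snd2_smul (t : ℝ) (a : E2 n) : snd2 (t • a) = t • snd2 a := rfl
@[simp] lemma fst2_neg (a : E2 n) : fst2 (-a) = -fst2 a := rfl
@[simp] lemma snd2_neg (a : E2 n) : snd2 (-a) = -snd2 a := rfl
@[simp] lemma fst2_sub (a b : E2 n) : fst2 (a - b) = fst2 a - fst2 b := rfl
@[simp] lemma snd2_sub (a b : E2 n) : snd2 (a - b) = snd2 a - snd2 b := rfl
@[simp] lemma fst2_zero : fst2 (0 : E2 n) = 0 := rfl
@[simp] lemma snd2_zero : snd2 (0 : E2 n) = 0 := rfl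

lemma mk2_ext {z w : E2 n} (h1 : fst2 z = fst2 w) (h2 : snd2 z = snd2 w) : z = w := by
  rw [← mk2_fst2_snd2 z, ← mk2_fst2_snd2 w, h1, h2]

lemma graphMap_apply (B : E n →L[ℝ] E n) (p : E n) : graphMap B p = mk2 p (B p) := rfl

lemma mem_rgeIA {B : E n →L[ℝ] E n} {z : E2 n} : z ∈ rgeIA B ↔ snd2 z = B (fst2 z) := by
  constructor
  · rintro ⟨p, rfl⟩; rfl
  · intro h; exact ⟨fst2 z, mk2_ext rfl h.symm⟩

lemma finrank_rgeIA (B : E n →L[ℝ] E n) : Module.finrank ℝ (rgeIA B) = n := by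
  have hinj : Function.Injective (graphMap (n := n) B) := by
    intro p q h
    have := congrArg fst2 h
    simpa [graphMap_apply] using this
  rw [rgeIA, LinearMap.finrank_range_of_inj hinj, finrank_euclideanSpace_fin]

/-- The graph set of `f` over `U`. -/
def Gf (U : Set (E n)) (f : E n → E n) : Set (E2 n) := {w | fst2 w ∈ U ∧ snd2 w = f (fst2 w)}

/-- Tangent cone to the graph at a differentiability point. -/
lemma tcone_Gf_of_hasFDerivAt {U : Set (E n)} (hU : IsOpen U) {f : E n → E n} {u : E n}
    (hu : u ∈ U) {D : E n →L[ℝ] E n} (hf : HasFDerivAt f D u) :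
    tcone (Gf U f) (mk2 u (f u)) = (rgeIA D : Set (E2 n)) := by
  ext ζ; constructor
  · rintro ⟨t, wk, ht, ht0, hwk, hmem⟩
    have hfst : Tendsto (fun k => fst2 (wk k)) atTop (𝓝 (fst2 ζ)) :=
      (continuous_fst2.tendsto ζ).comp hwk
    have hsnd : Tendsto (fun k => snd2 (wk k)) atTop (𝓝 (snd2 ζ)) :=
      (continuous_snd2.tendsto ζ).comp hwk
    have heq : ∀ k, snd2 (wk k) = (t k)⁻¹ • (f (u + t k • fst2 (wk k)) - f u) := by
      intro k
      have h2 := (hmem k).2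
      simp only [Gf, mem_setOf_eq, fst2_add, snd2_add, fst2_smul, snd2_smul, fst2_mk2,
        snd2_mk2] at h2
      rw [← h2]
      rw [show f u + t k • snd2 (wk k) - f u = t k • snd2 (wk k) by abel,
        smul_smul, inv_mul_cancel₀ (ht k).ne', one_smul]
    have hq := tendsto_quot hf ht ht0 hfst
    have : Tendsto (fun k => snd2 (wk k)) atTop (𝓝 (D (fst2 ζ))) := by
      refine hq.congr fun k => (heq k).symm
    rw [SetLike.mem_coe, mem_rgeIA]
    exact tendsto_nhds_unique hsnd this
  · rw [SetLike.mem_coe, mem_rgeIA]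
    intro hζ
    set w := fst2 ζ
    have ht : ∀ k : ℕ, (0:ℝ) < (k+1:ℝ)⁻¹ := fun k => by positivity
    have ht0 : Tendsto (fun k : ℕ => ((k:ℝ)+1)⁻¹) atTop (𝓝 0) :=
      tendsto_one_div_add_atTop_nhds_zero_nat.congr fun k => by rw [one_div]
    set t : ℕ → ℝ := fun k => ((k:ℝ)+1)⁻¹
    set wk : ℕ → E2 n := fun k => mk2 w ((t k)⁻¹ • (f (u + t k • w) - f u))
    have hq := tendsto_quot hf (fun k => ht k) ht0 (tendsto_const_nhds (x := w))
    have hwk : Tendsto wk atTop (𝓝 ζ) := by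
      have : Tendsto (fun k => (w, (t k)⁻¹ • (f (u + t k • w) - f u))) atTop
          (𝓝 (w, D w)) := tendsto_const_nhds.prodMk_nhds hq
      have h2 := (continuous_mk2.tendsto (w, D w)).comp this
      have : ζ = mk2 w (D w) := mk2_ext rfl hζ
      rw [this]
      exact h2
    refine mem_tcone_of_eventually t wk (fun k => ht k) ht0 hwk ?_
    have hUm : ∀ᶠ k in atTop, u + t k • w ∈ U := by
      have : Tendsto (fun k => u + t k • w) atTop (𝓝 u) :=
        tendsto_base ht0 tendsto_const_nhds
      exact this.eventually (hU.eventually_mem hu)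
    filter_upwards [hUm] with k hk
    constructor
    · simpa [wk] using hk
    · show snd2 (mk2 u (f u) + t k • wk k) = f (fst2 (mk2 u (f u) + t k • wk k))
      simp only [fst2_add, snd2_add, fst2_smul, snd2_smul, fst2_mk2, snd2_mk2, wk]
      rw [smul_smul, mul_inv_cancel₀ (ht k).ne', one_smul]
      abel

end A3

section A4
variable {n : ℕ}

def fst2L (n : ℕ) : E2 n →ₗ[ℝ] E n := (LinearMap.fst ℝ (E n) (E n)).comp (lp2 n).toLinearMap
def snd2L (n : ℕ) : E2 n →ₗ[ℝ] E n := (LinearMap.snd ℝ (E n) (E n)).comp (lp2 n).toLinearMap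

@[simp] lemma fst2L_apply (z : E2 n) : fst2L n z = fst2 z := rfl
@[simp] lemma snd2L_apply (z : E2 n) : snd2L n z = snd2 z := rfl

lemma norm_mk2_sq (a b : E n) : ‖mk2 a b‖ ^ 2 = ‖a‖ ^ 2 + ‖b‖ ^ 2 := by
  rw [← real_inner_self_eq_norm_sq, inner_e2, fst2_mk2, snd2_mk2,
    real_inner_self_eq_norm_sq, real_inner_self_eq_norm_sq]

lemma norm_mk2_le (a b : E n) : ‖mk2 a b‖ ≤ ‖a‖ + ‖b‖ := by
  have h1 : ‖mk2 a b‖ ^ 2 = ‖a‖ ^ 2 + ‖b‖ ^ 2 := norm_mk2_sq a b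
  nlinarith [norm_nonneg (mk2 a b), norm_nonneg a, norm_nonneg b]

lemma norm_fst2_le (z : E2 n) : ‖fst2 z‖ ≤ ‖z‖ := by
  have := norm_mk2_sq (fst2 z) (snd2 z)
  rw [mk2_fst2_snd2] at this
  nlinarith [norm_nonneg z, norm_nonneg (fst2 z), norm_nonneg (snd2 z), sq_nonneg ‖snd2 z‖]

lemma norm_snd2_le (z : E2 n) : ‖snd2 z‖ ≤ ‖z‖ := by
  have := norm_mk2_sq (fst2 z) (snd2 z)
  rw [mk2_fst2_snd2] at this
  nlinarith [norm_nonneg z, norm_nonneg (fst2 z), norm_nonneg (snd2 z), sq_nonneg ‖fst2 z‖]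

lemma vert_eq_zero_of_mem_tcone_Gf {U : Set (E n)} {f : E n → E n} {K : ℝ≥0}
    (hK : LipschitzOnWith K f U) {u : E n} (hu : u ∈ U) {v : E n}
    (hv : mk2 0 v ∈ tcone (Gf U f) (mk2 u (f u))) : v = 0 := by
  obtain ⟨t, wk, ht, ht0, hwk, hmem⟩ := hv
  have hfst : Tendsto (fun k => fst2 (wk k)) atTop (𝓝 0) := by
    simpa [Function.comp_def] using (continuous_fst2.tendsto _).comp hwk
  have hsnd : Tendsto (fun k => snd2 (wk k)) atTop (𝓝 v) := by
    simpa [Function.comp_def] using (continuous_snd2.tendsto _).comp hwk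
  have hbound : ∀ k, ‖snd2 (wk k)‖ ≤ K * ‖fst2 (wk k)‖ := by
    intro k
    have h1 : u + t k • fst2 (wk k) ∈ U := by
      have := (hmem k).1; simpa using this
    have h2 : f u + t k • snd2 (wk k) = f (u + t k • fst2 (wk k)) := by
      have := (hmem k).2; simpa using this
    have hd := hK.dist_le_mul _ h1 _ hu
    rw [dist_eq_norm, dist_eq_norm, ← h2] at hd
    have hL : f u + t k • snd2 (wk k) - f u = t k • snd2 (wk k) := by abel
    have hR : u + t k • fst2 (wk k) - u = t k • fst2 (wk k) := by abel
    rw [hL, hR, norm_smul, norm_smul, Real.norm_eq_abs, abs_of_pos (ht k)] at hd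
    rw [mul_left_comm] at hd
    exact (mul_le_mul_iff_right₀ (ht k)).1 hd
  have hlim : Tendsto (fun k => (K : ℝ) * ‖fst2 (wk k)‖) atTop (𝓝 ((K:ℝ) * ‖(0 : E n)‖)) :=
    (hfst.norm).const_mul _
  have := le_of_tendsto_of_tendsto' hsnd.norm hlim hbound
  simp only [norm_zero, mul_zero] at this
  exact norm_le_zero_iff.1 this

lemma exists_deriv_of_tcone_subspace {U : Set (E n)} (hU : IsOpen U) {f : E n → E n}
    {K : ℝ≥0} (hK : LipschitzOnWith K f U) {u : E n} (hu : u ∈ U) {M : Submodule ℝ (E2 n)}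
    (hM : (M : Set (E2 n)) = tcone (Gf U f) (mk2 u (f u)))
    (hrank : Module.finrank ℝ M = n) :
    ∃ D : E n →L[ℝ] E n, HasFDerivAt f D u ∧ M = rgeIA D := by
  have hvert : ∀ v : E n, mk2 0 v ∈ M → v = 0 := by
    intro v hv
    exact vert_eq_zero_of_mem_tcone_Gf hK hu (hM ▸ hv)
  -- build the linear map B
  set T : M →ₗ[ℝ] E n := (fst2L n).comp M.subtype with hT
  have hTinj : Function.Injective T := by
    rw [← LinearMap.ker_eq_bot]
    rw [Submodule.eq_bot_iff]
    rintro ⟨m, hm⟩ hker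
    have hfst : fst2 m = 0 := hker
    have hm0 : m = mk2 0 (snd2 m) := mk2_ext (by simpa using hfst) (by simp)
    have := hvert (snd2 m) (hm0 ▸ hm)
    have hmz : m = 0 := by rw [hm0, this]; exact mk2_ext (by simp) (by simp)
    exact Subtype.ext hmz
  have hTsurj : LinearMap.range T = ⊤ := by
    apply Submodule.eq_top_of_finrank_eq
    rw [LinearMap.finrank_range_of_inj hTinj, hrank, finrank_euclideanSpace_fin]
  set e : M ≃ₗ[ℝ] E n := LinearEquiv.ofBijective T ⟨hTinj, LinearMap.range_eq_top.1 hTsurj⟩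
    with he
  set B : E n →L[ℝ] E n :=
    LinearMap.toContinuousLinearMap ((snd2L n).comp (M.subtype.comp e.symm.toLinearMap)) with hB
  have hesymm : ∀ p : E n, (e.symm p : E2 n) = mk2 p (B p) := by
    intro p
    refine mk2_ext ?_ rfl
    show fst2 ((e.symm p : E2 n)) = p
    exact e.apply_symm_apply p
  have hle : rgeIA B ≤ M := by
    rintro z ⟨p, rfl⟩
    rw [graphMap_apply, ← hesymm p]
    exact (e.symm p).2
  have hMB : M = rgeIA B := by
    refine (Submodule.eq_of_le_of_finrank_eq hle ?_).symm
    rw [finrank_rgeIA, hrank]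
  have hmemB : ∀ ζ : E2 n, ζ ∈ M → snd2 ζ = B (fst2 ζ) := by
    intro ζ hζ
    exact mem_rgeIA.1 (hMB ▸ hζ)
  refine ⟨B, ?_, hMB⟩
  rw [hasFDerivAt_iff_isLittleO_nhds_zero, Asymptotics.isLittleO_iff]
  intro c hc
  by_contra hcon
  rw [Filter.not_eventually] at hcon
  have hUball : ∀ᶠ h : E n in 𝓝 0, u + h ∈ U := by
    have htend : Tendsto (fun h : E n => u + h) (𝓝 0) (𝓝 u) := by
      have hcont : Continuous (fun h : E n => u + h) := continuous_const.add continuous_id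
      simpa using hcont.tendsto 0
    exact htend.eventually (hU.eventually_mem hu)
  have hfreq := hcon.and_eventually hUball
  have hseq : ∀ j : ℕ, ∃ h : E n, ‖h‖ < ((j:ℝ)+1)⁻¹ ∧
      ¬‖f (u + h) - f u - B h‖ ≤ c * ‖h‖ ∧ u + h ∈ U := by
    intro j
    obtain ⟨h, hball, hp⟩ := (Metric.nhds_basis_ball.frequently_iff).1 hfreq _
      (show (0:ℝ) < ((j:ℝ)+1)⁻¹ by positivity)
    exact ⟨h, by simpa [Metric.mem_ball, dist_zero_right] using hball, hp.1, hp.2⟩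
  choose h hball hnb hUm using hseq
  have hne : ∀ j, h j ≠ 0 := by
    intro j hj
    apply hnb j
    simp [hj]
  set t : ℕ → ℝ := fun j => ‖h j‖ with hts
  have htpos : ∀ j, 0 < t j := fun j => norm_pos_iff.2 (hne j)
  have ht0 : Tendsto t atTop (𝓝 0) := by
    have h1 : Tendsto (fun j : ℕ => ((j:ℝ)+1)⁻¹) atTop (𝓝 0) :=
      tendsto_one_div_add_atTop_nhds_zero_nat.congr fun k => by rw [one_div]
    exact tendsto_of_tendsto_of_tendsto_of_le_of_le tendsto_const_nhds h1
      (fun j => (htpos j).le) (fun j => (hball j).le)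
  set w : ℕ → E n := fun j => (t j)⁻¹ • h j with hws
  set v : ℕ → E n := fun j => (t j)⁻¹ • (f (u + h j) - f u) with hvs
  have hwnorm : ∀ j, ‖w j‖ = 1 := by
    intro j
    rw [hws]
    rw [norm_smul, norm_inv, Real.norm_eq_abs, abs_of_pos (htpos j)]
    exact inv_mul_cancel₀ (htpos j).ne'
  have hvnorm : ∀ j, ‖v j‖ ≤ K := by
    intro j
    have hd := hK.dist_le_mul _ (hUm j) _ hu
    rw [dist_eq_norm, dist_eq_norm] at hd
    have : u + h j - u = h j := by abel
    rw [this] at hd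
    rw [hvs]
    rw [norm_smul, norm_inv, Real.norm_eq_abs, abs_of_pos (htpos j)]
    rw [inv_mul_le_iff₀ (htpos j)]
    calc ‖f (u + h j) - f u‖ ≤ K * ‖h j‖ := hd
    _ = K * t j := rfl
    _ = t j * K := mul_comm _ _
  set ζ : ℕ → E2 n := fun j => mk2 (w j) (v j) with hζs
  have hζball : ∀ j, ζ j ∈ closedBall (0 : E2 n) (1 + K) := by
    intro j
    rw [Metric.mem_closedBall, dist_zero_right]
    calc ‖ζ j‖ ≤ ‖w j‖ + ‖v j‖ := norm_mk2_le _ _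
    _ ≤ 1 + K := by rw [hwnorm j]; exact add_le_add_right (hvnorm j) 1
  have hcpt : IsCompact (closedBall (0 : E2 n) (1 + K)) := isCompact_closedBall _ _
  obtain ⟨zl, hzlmem, φ, hφ, hζconv⟩ := hcpt.tendsto_subseq hζball
  have htφ : Tendsto (t ∘ φ) atTop (𝓝 0) := ht0.comp hφ.tendsto_atTop
  have hzlM : zl ∈ M := by
    rw [← SetLike.mem_coe, hM]
    refine ⟨t ∘ φ, ζ ∘ φ, fun j => htpos _, htφ, hζconv, fun j => ?_⟩
    constructor
    · show fst2 _ ∈ U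
      simp only [fst2_add, fst2_smul, fst2_mk2, Function.comp_apply, hζs]
      have : t (φ j) • w (φ j) = h (φ j) := by
        rw [hws, smul_smul, mul_inv_cancel₀ (htpos _).ne', one_smul]
      rw [this]
      exact hUm (φ j)
    · show snd2 _ = f (fst2 _)
      simp only [fst2_add, snd2_add, fst2_smul, snd2_smul, fst2_mk2, snd2_mk2,
        Function.comp_apply, hζs]
      have h1 : t (φ j) • w (φ j) = h (φ j) := by
        rw [hws, smul_smul, mul_inv_cancel₀ (htpos _).ne', one_smul]
      have h2 : t (φ j) • v (φ j) = f (u + h (φ j)) - f u := by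
        rw [hvs, smul_smul, mul_inv_cancel₀ (htpos _).ne', one_smul]
      rw [h1, h2]
      abel
  have hfinal : snd2 zl = B (fst2 zl) := hmemB _ hzlM
  have hgap : ∀ j, c < ‖v j - B (w j)‖ := by
    intro j
    have hnb' := hnb j
    push_neg at hnb'
    have hrw : v j - B (w j) = (t j)⁻¹ • (f (u + h j) - f u - B (h j)) := by
      rw [hvs, hws, map_smul, ← smul_sub]
    rw [hrw, norm_smul, norm_inv, Real.norm_eq_abs, abs_of_pos (htpos j)]
    rw [lt_inv_mul_iff₀ (htpos j)]
    calc t j * c = c * ‖h j‖ := by rw [mul_comm]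
    _ < ‖f (u + h j) - f u - B (h j)‖ := hnb'
  have hgconv : Tendsto (fun j => ‖v (φ j) - B (w (φ j))‖) atTop
      (𝓝 ‖snd2 zl - B (fst2 zl)‖) := by
    have hc2 : Continuous (fun z : E2 n => ‖snd2 z - B (fst2 z)‖) :=
      (continuous_snd2.sub (B.continuous.comp continuous_fst2)).norm
    have := (hc2.tendsto zl).comp hζconv
    refine this.congr fun j => ?_
    simp [hζs]
  have hle2 : c ≤ ‖snd2 zl - B (fst2 zl)‖ :=
    le_of_tendsto_of_tendsto' tendsto_const_nhds hgconv fun j => (hgap (φ j)).le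
  rw [hfinal] at hle2
  simp only [sub_self, norm_zero] at hle2
  exact absurd (hc.trans_le hle2) (lt_irrefl 0)

end A4

section A5
variable {n : ℕ}

lemma projC_mem (L : Submodule ℝ (E2 n)) (x : E2 n) : projC L x ∈ L := by
  simp [projC]

lemma projC_apply_of_mem {L : Submodule ℝ (E2 n)} {x : E2 n} (hx : x ∈ L) : projC L x = x := by
  simp [projC, Submodule.starProjection_eq_self_iff.2 hx]

lemma mem_iff_projC {L : Submodule ℝ (E2 n)} {x : E2 n} : x ∈ L ↔ projC L x = x := by
  refine ⟨projC_apply_of_mem, fun h => ?_⟩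
  rw [← h]; exact projC_mem L x

lemma projC_inj {L₁ L₂ : Submodule ℝ (E2 n)} (h : projC L₁ = projC L₂) : L₁ = L₂ := by
  ext x
  rw [mem_iff_projC, mem_iff_projC, h]

open ContinuousLinearMap in
/-- Explicit formula for the orthogonal projection onto the range of an injective map. -/
lemma projC_eq_formula (L : Submodule ℝ (E2 n)) (Z : E n →L[ℝ] E2 n) (Gi : E n →L[ℝ] E n)
    (hGi : ((adjoint Z).comp Z).comp Gi = ContinuousLinearMap.id ℝ (E n))
    (hr : ∀ x, x ∈ L ↔ ∃ p, Z p = x) :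
    projC L = Z.comp (Gi.comp (adjoint Z)) := by
  ext x
  have hmem : Z (Gi ((adjoint Z) x)) ∈ L := (hr _).2 ⟨_, rfl⟩
  have horth : ∀ w ∈ L, ⟪x - Z (Gi ((adjoint Z) x)), w⟫_ℝ = 0 := by
    rintro w hw
    obtain ⟨p, rfl⟩ := (hr w).1 hw
    rw [← ContinuousLinearMap.adjoint_inner_left]
    have hz : (adjoint Z) (x - Z (Gi ((adjoint Z) x))) = 0 := by
      rw [map_sub]
      have := congrArg (fun T : E n →L[ℝ] E n => T ((adjoint Z) x)) hGi
      simp only [ContinuousLinearMap.comp_apply, ContinuousLinearMap.id_apply] at this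
      rw [this]
      abel
    rw [hz, inner_zero_left]
  have := Submodule.eq_starProjection_of_mem_of_inner_eq_zero hmem horth
  show L.subtypeL (L.orthogonalProjectionOnto x) = _
  simpa using this

open ContinuousLinearMap in
lemma isUnit_adjoint_comp {Z : E n →L[ℝ] E2 n} (hinj : Function.Injective Z) :
    IsUnit ((adjoint Z).comp Z) := by
  set G := (adjoint Z).comp Z with hG
  have hGinj : Function.Injective G := by
    intro a b hab
    have h0 : G (a - b) = 0 := by rw [map_sub, hab, sub_self]
    have : ⟪G (a - b), a - b⟫_ℝ = ‖Z (a - b)‖ ^ 2 := by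
      rw [hG, ContinuousLinearMap.comp_apply, ContinuousLinearMap.adjoint_inner_left,
        real_inner_self_eq_norm_sq]
    rw [h0, inner_zero_left] at this
    have hZ0 : Z (a - b) = 0 := by
      have := this.symm
      rwa [pow_eq_zero_iff (by norm_num), norm_eq_zero] at this
    have := hinj (hZ0.trans (map_zero Z).symm)
    exact sub_eq_zero.1 this
  have hGsurj : Function.Surjective (G.toLinearMap) :=
    (LinearMap.injective_iff_surjective).1 hGinj
  set e : E n ≃ₗ[ℝ] E n := LinearEquiv.ofBijective G.toLinearMap ⟨hGinj, hGsurj⟩ with he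
  refine ⟨⟨G, LinearMap.toContinuousLinearMap e.symm.toLinearMap, ?_, ?_⟩, rfl⟩
  · refine ContinuousLinearMap.ext fun x => ?_
    show G (e.symm x) = x
    exact e.apply_symm_apply x
  · refine ContinuousLinearMap.ext fun x => ?_
    show e.symm (G x) = x
    exact e.symm_apply_apply x

open ContinuousLinearMap in
lemma projC_range_eq (L : Submodule ℝ (E2 n)) (Z : E n →L[ℝ] E2 n)
    (hinj : Function.Injective Z) (hr : ∀ x, x ∈ L ↔ ∃ p, Z p = x) :
    projC L = Z.comp ((Ring.inverse ((adjoint Z).comp Z)).comp (adjoint Z)) := by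
  obtain ⟨u, hu⟩ := isUnit_adjoint_comp hinj
  refine projC_eq_formula L Z _ ?_ hr
  rw [← hu, Ring.inverse_unit]
  show ((u : E n →L[ℝ] E n) * ↑u⁻¹) = ContinuousLinearMap.id ℝ (E n)
  rw [Units.mul_inv]
  rfl

open ContinuousLinearMap in
set_option maxHeartbeats 1000000 in
/-- Continuity of projections onto ranges of injective maps, sequence form. -/
lemma tendsto_projC_range {Zk : ℕ → (E n →L[ℝ] E2 n)} {Z : E n →L[ℝ] E2 n}
    (hZ : Tendsto Zk atTop (𝓝 Z)) (hinjk : ∀ k, Function.Injective (Zk k))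
    (hinj : Function.Injective Z) {Lk : ℕ → Submodule ℝ (E2 n)} {L : Submodule ℝ (E2 n)}
    (hrk : ∀ k x, x ∈ Lk k ↔ ∃ p, Zk k p = x) (hr : ∀ x, x ∈ L ↔ ∃ p, Z p = x) :
    Tendsto (fun k => projC (Lk k)) atTop (𝓝 (projC L)) := by
  have hadjc : Continuous (fun T : E n →L[ℝ] E2 n => adjoint T) :=
    (ContinuousLinearMap.adjoint (𝕜 := ℝ) (E := E n) (F := E2 n)).continuous
  have hadj : Tendsto (fun k => adjoint (Zk k)) atTop (𝓝 (adjoint Z)) :=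
    (hadjc.tendsto Z).comp hZ
  -- G_k → G
  have hG : Tendsto (fun k => (adjoint (Zk k)).comp (Zk k)) atTop (𝓝 ((adjoint Z).comp Z)) := by
    have hbil : Continuous (fun p : (E2 n →L[ℝ] E n) × (E n →L[ℝ] E2 n) => p.1.comp p.2) :=
      isBoundedBilinearMap_comp.continuous
    exact (hbil.tendsto _).comp (hadj.prodMk_nhds hZ)
  have hunit := isUnit_adjoint_comp hinj
  have hGi : Tendsto (fun k => Ring.inverse ((adjoint (Zk k)).comp (Zk k))) atTop
      (𝓝 (Ring.inverse ((adjoint Z).comp Z))) := by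
    obtain ⟨u, hu⟩ := hunit
    have := NormedRing.inverse_continuousAt u
    rw [hu] at this
    exact (this.tendsto).comp hG
  have hfinal : Tendsto (fun k => (Zk k).comp ((Ring.inverse ((adjoint (Zk k)).comp (Zk k))).comp
      (adjoint (Zk k)))) atTop (𝓝 (Z.comp ((Ring.inverse ((adjoint Z).comp Z)).comp (adjoint Z)))) := by
    have hbil1 : Continuous (fun p : (E n →L[ℝ] E n) × (E2 n →L[ℝ] E n) => p.1.comp p.2) :=
      isBoundedBilinearMap_comp.continuous
    have h1 : Tendsto (fun k => (Ring.inverse ((adjoint (Zk k)).comp (Zk k))).comp (adjoint (Zk k)))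
        atTop (𝓝 ((Ring.inverse ((adjoint Z).comp Z)).comp (adjoint Z))) :=
      (hbil1.tendsto _).comp (hGi.prodMk_nhds hadj)
    have hbil2 : Continuous (fun p : (E n →L[ℝ] E2 n) × (E2 n →L[ℝ] E n) => p.1.comp p.2) :=
      isBoundedBilinearMap_comp.continuous
    exact (hbil2.tendsto _).comp (hZ.prodMk_nhds h1)
  have heq : ∀ k, projC (Lk k) = (Zk k).comp ((Ring.inverse ((adjoint (Zk k)).comp (Zk k))).comp
      (adjoint (Zk k))) := fun k => projC_range_eq _ _ (hinjk k) (hrk k)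
  rw [projC_range_eq L Z hinj hr]
  exact hfinal.congr fun k => (heq k).symm

lemma tendsto_dZ_zero {Lk : ℕ → Submodule ℝ (E2 n)} {L : Submodule ℝ (E2 n)}
    (h : Tendsto (fun k => projC (Lk k)) atTop (𝓝 (projC L))) :
    Tendsto (fun k => dZ (Lk k) L) atTop (𝓝 0) := by
  have := (tendsto_iff_norm_sub_tendsto_zero).1 h
  exact this.congr fun k => rfl

lemma dZ_lim_unique {Lk : ℕ → Submodule ℝ (E2 n)} {L L' : Submodule ℝ (E2 n)}
    (h : Tendsto (fun k => dZ (Lk k) L) atTop (𝓝 0))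
    (h' : Tendsto (fun k => dZ (Lk k) L') atTop (𝓝 0)) : L = L' := by
  apply projC_inj (L₁ := L) (L₂ := L')
  have hdiff : Tendsto (fun k => dZ (Lk k) L + dZ (Lk k) L') atTop (𝓝 0) := by
    simpa using h.add h'
  have hb : ∀ k, ‖projC L - projC L'‖ ≤ dZ (Lk k) L + dZ (Lk k) L' := by
    intro k
    have : projC L - projC L' = (projC (Lk k) - projC L') - (projC (Lk k) - projC L) := by abel
    rw [this]
    exact (norm_sub_le _ _).trans (by rw [add_comm]; rfl)
  have := le_of_tendsto_of_tendsto' (tendsto_const_nhds (x := ‖projC L - projC L'‖)) hdiff hb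
  rw [← sub_eq_zero]
  exact norm_le_zero_iff.1 this

end A5

section A6
variable {n : ℕ}

@[simp] lemma Sneg_mk2 (a b : E n) : Sneg n (mk2 a b) = mk2 (-b) a := rfl
@[simp] lemma Sneg_symm_mk2 (a b : E n) : (Sneg n).symm (mk2 a b) = mk2 b (-a) := rfl

lemma Sneg_eq_neg_symm (x : E2 n) : Sneg n x = -((Sneg n).symm x) := by
  rw [← mk2_fst2_snd2 x, Sneg_mk2, Sneg_symm_mk2]
  exact mk2_ext (by simp) (by simp)

/-- `graphMap B` as a continuous linear map. -/
def gmCLM (B : E n →L[ℝ] E n) : E n →L[ℝ] E2 n :=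
  ⟨graphMap B, continuous_mk2.comp (continuous_id.prodMk B.continuous)⟩

@[simp] lemma gmCLM_apply (B : E n →L[ℝ] E n) (p : E n) : gmCLM B p = mk2 p (B p) := rfl

lemma gmCLM_inj (B : E n →L[ℝ] E n) : Function.Injective (gmCLM B) := by
  intro p q h
  have := congrArg fst2 h
  simpa using this

lemma mem_comap_iff (A Ai : E2 n →L[ℝ] E2 n) (h1 : ∀ x, Ai (A x) = x)
    (h2 : ∀ x, A (Ai x) = x) (B : E n →L[ℝ] E n) (x : E2 n) :
    x ∈ Submodule.comap (A : E2 n →ₗ[ℝ] E2 n) (rgeIA B) ↔ ∃ p, (Ai.comp (gmCLM B)) p = x := by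
  constructor
  · intro hx
    obtain ⟨p, hp⟩ := (hx : A x ∈ rgeIA B)
    refine ⟨p, ?_⟩
    have hc := congrArg Ai hp
    have hc2 : Ai ((graphMap B) p) = x := hc.trans (h1 x)
    exact hc2
  · rintro ⟨p, rfl⟩
    show A (Ai (gmCLM B p)) ∈ rgeIA B
    rw [h2]
    exact ⟨p, rfl⟩

lemma comap_inj (A Ai : E2 n →L[ℝ] E2 n) (h2 : ∀ x, A (Ai x) = x) (B : E n →L[ℝ] E n) :
    Function.Injective (Ai.comp (gmCLM B)) := by
  intro p q h
  have hc := congrArg (fun y => fst2 (A y)) h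
  simp only [ContinuousLinearMap.comp_apply, h2] at hc
  simpa using hc

lemma comap_eq_range (A Ai : E2 n →L[ℝ] E2 n) (h1 : ∀ x, Ai (A x) = x)
    (h2 : ∀ x, A (Ai x) = x) (B : E n →L[ℝ] E n) :
    Submodule.comap (A : E2 n →ₗ[ℝ] E2 n) (rgeIA B) =
      LinearMap.range ((Ai.comp (gmCLM B)) : E n →ₗ[ℝ] E2 n) := by
  ext x
  rw [mem_comap_iff A Ai h1 h2 B x]
  rfl

lemma finrank_comap_rgeIA (A Ai : E2 n →L[ℝ] E2 n) (h1 : ∀ x, Ai (A x) = x)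
    (h2 : ∀ x, A (Ai x) = x) (B : E n →L[ℝ] E n) :
    Module.finrank ℝ (Submodule.comap (A : E2 n →ₗ[ℝ] E2 n) (rgeIA B)) = n := by
  rw [comap_eq_range A Ai h1 h2 B, LinearMap.finrank_range_of_inj, finrank_euclideanSpace_fin]
  exact comap_inj A Ai h2 B

open ContinuousLinearMap in
lemma orth_comap (A Ai : E2 n →L[ℝ] E2 n) (h1 : ∀ x, Ai (A x) = x)
    (h2 : ∀ x, A (Ai x) = x) (B : E n →L[ℝ] E n) :
    (Submodule.comap (A : E2 n →ₗ[ℝ] E2 n) (rgeIA B))ᗮ =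
    Submodule.map ((adjoint A) : E2 n →ₗ[ℝ] E2 n) (rgeIA B)ᗮ := by
  ext x
  rw [Submodule.mem_orthogonal]
  constructor
  · intro hx
    refine ⟨(adjoint Ai) x, ?_, ?_⟩
    · show (adjoint Ai) x ∈ (rgeIA B)ᗮ
      rw [Submodule.mem_orthogonal]
      intro m hm
      rw [real_inner_comm, ContinuousLinearMap.adjoint_inner_left, real_inner_comm]
      refine hx _ ?_
      show A (Ai m) ∈ rgeIA B
      rw [h2]
      exact hm
    · show (adjoint A) ((adjoint Ai) x) = x
      have hAiA : Ai.comp A = ContinuousLinearMap.id ℝ (E2 n) :=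
        ContinuousLinearMap.ext fun y => h1 y
      have hadj : (adjoint A).comp (adjoint Ai) = adjoint (Ai.comp A) :=
        (ContinuousLinearMap.adjoint_comp Ai A).symm
      rw [hAiA, adjoint_id] at hadj
      have hc := congrArg (fun T : E2 n →L[ℝ] E2 n => T x) hadj
      simpa using hc
  · rintro ⟨w, hw, rfl⟩
    intro y hy
    show ⟪y, (adjoint A) w⟫_ℝ = 0
    rw [real_inner_comm, ContinuousLinearMap.adjoint_inner_left, real_inner_comm]
    exact (Submodule.mem_orthogonal _ _).1 hw _ hy

open ContinuousLinearMap in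
lemma orth_rgeIA (B : E n →L[ℝ] E n) :
    (rgeIA B)ᗮ = Submodule.map (Sneg n).toLinearMap (rgeIA (adjoint B)) := by
  ext x
  rw [Submodule.mem_orthogonal]
  constructor
  · intro hx
    refine ⟨mk2 (snd2 x) ((adjoint B) (snd2 x)), ⟨snd2 x, rfl⟩, ?_⟩
    show Sneg n (mk2 (snd2 x) ((adjoint B) (snd2 x))) = x
    rw [Sneg_mk2]
    refine mk2_ext ?_ (by simp)
    simp only [fst2_mk2]
    have hkey : ∀ p : E n, ⟪fst2 x, p⟫_ℝ + ⟪snd2 x, B p⟫_ℝ = 0 := by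
      intro p
      have hh := hx _ (⟨p, rfl⟩ : mk2 p (B p) ∈ rgeIA B)
      rw [real_inner_comm, inner_e2] at hh
      simpa using hh
    have hkey2 : ∀ p : E n, ⟪fst2 x + (adjoint B) (snd2 x), p⟫_ℝ = 0 := by
      intro p
      rw [inner_add_left, ContinuousLinearMap.adjoint_inner_left]
      exact hkey p
    have h0 : fst2 x + (adjoint B) (snd2 x) = 0 :=
      inner_self_eq_zero.1 (hkey2 (fst2 x + (adjoint B) (snd2 x)))
    have := eq_neg_of_add_eq_zero_left h0
    rw [this]
  · rintro ⟨w, ⟨q, rfl⟩, rfl⟩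
    intro y hy
    obtain ⟨p, rfl⟩ := hy
    show ⟪mk2 p (B p), Sneg n (mk2 q ((adjoint B) q))⟫_ℝ = 0
    rw [Sneg_mk2, inner_e2]
    simp only [fst2_mk2, snd2_mk2]
    rw [inner_neg_right, ContinuousLinearMap.adjoint_inner_right]
    ring
end A6

section A6B
variable {n : ℕ}

lemma map_Sneg_eq_map_symm (T : E2 n →ₗ[ℝ] E2 n) (M : Submodule ℝ (E2 n)) :
    Submodule.map (T ∘ₗ (Sneg n).toLinearMap) M =
      Submodule.map (T ∘ₗ (Sneg n).symm.toLinearMap) M := by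
  ext x
  constructor
  · rintro ⟨m, hm, rfl⟩
    refine ⟨-m, M.neg_mem hm, ?_⟩
    show T ((Sneg n).symm (-m)) = T (Sneg n m)
    rw [map_neg, ← Sneg_eq_neg_symm]
  · rintro ⟨m, hm, rfl⟩
    refine ⟨-m, M.neg_mem hm, ?_⟩
    show T (Sneg n (-m)) = T ((Sneg n).symm m)
    rw [map_neg, Sneg_eq_neg_symm, neg_neg]

open ContinuousLinearMap in
lemma adjS_comap (A Ai : E2 n →L[ℝ] E2 n) (h1 : ∀ x, Ai (A x) = x) (h2 : ∀ x, A (Ai x) = x)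
    (B : E n →L[ℝ] E n) :
    adjS (Submodule.comap (A : E2 n →ₗ[ℝ] E2 n) (rgeIA B)) =
    Submodule.map ((Sneg n).toLinearMap ∘ₗ (adjoint A).toLinearMap ∘ₗ (Sneg n).symm.toLinearMap)
      (rgeIA (adjoint B)) := by
  rw [adjS, orth_comap A Ai h1 h2 B, orth_rgeIA B]
  rw [← Submodule.map_comp, ← Submodule.map_comp]
  have hcomp : ((Sneg n).toLinearMap ∘ₗ ((adjoint A) : E2 n →ₗ[ℝ] E2 n)) ∘ₗ
      (Sneg n).toLinearMap =
      ((Sneg n).toLinearMap ∘ₗ (adjoint A).toLinearMap) ∘ₗ (Sneg n).toLinearMap := rfl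
  calc Submodule.map ((Sneg n).toLinearMap ∘ₗ ((adjoint A) : E2 n →ₗ[ℝ] E2 n) ∘ₗ
        (Sneg n).toLinearMap) (rgeIA (adjoint B))
      = Submodule.map (((Sneg n).toLinearMap ∘ₗ (adjoint A).toLinearMap) ∘ₗ
        (Sneg n).toLinearMap) (rgeIA (adjoint B)) := by rw [LinearMap.comp_assoc]
    _ = Submodule.map (((Sneg n).toLinearMap ∘ₗ (adjoint A).toLinearMap) ∘ₗ
        (Sneg n).symm.toLinearMap) (rgeIA (adjoint B)) := map_Sneg_eq_map_symm _ _
    _ = Submodule.map ((Sneg n).toLinearMap ∘ₗ (adjoint A).toLinearMap ∘ₗ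
        (Sneg n).symm.toLinearMap) (rgeIA (adjoint B)) := by rw [LinearMap.comp_assoc]

end A6B

section A7
open MeasureTheory
variable {n : ℕ}

lemma norm_fderiv_le {U : Set (E n)} (hU : IsOpen U) {f : E n → E n} {K : ℝ≥0}
    (hK : LipschitzOnWith K f U) {u : E n} (hu : u ∈ U) {D : E n →L[ℝ] E n}
    (hD : HasFDerivAt f D u) : ‖D‖ ≤ K := by
  refine ContinuousLinearMap.opNorm_le_bound D K.coe_nonneg fun w => ?_
  have ht : ∀ k : ℕ, (0:ℝ) < ((k:ℝ)+1)⁻¹ := fun k => by positivity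
  have ht0 : Tendsto (fun k : ℕ => ((k:ℝ)+1)⁻¹) atTop (𝓝 0) :=
    tendsto_one_div_add_atTop_nhds_zero_nat.congr fun k => by rw [one_div]
  set t : ℕ → ℝ := fun k => ((k:ℝ)+1)⁻¹
  have hq := tendsto_quot hD ht ht0 (tendsto_const_nhds (x := w))
  have hUm : ∀ᶠ k in atTop, u + t k • w ∈ U :=
    (tendsto_base ht0 tendsto_const_nhds).eventually (hU.eventually_mem hu)
  have hbd : ∀ᶠ k in atTop, ‖(t k)⁻¹ • (f (u + t k • w) - f u)‖ ≤ K * ‖w‖ := by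
    filter_upwards [hUm] with k hk
    have hd := hK.dist_le_mul _ hk _ hu
    rw [dist_eq_norm, dist_eq_norm] at hd
    have h3 : u + t k • w - u = t k • w := by abel
    rw [h3, norm_smul, Real.norm_eq_abs, abs_of_pos (ht k)] at hd
    rw [norm_smul, norm_inv, Real.norm_eq_abs, abs_of_pos (ht k), inv_mul_le_iff₀ (ht k)]
    calc ‖f (u + t k • w) - f u‖ ≤ K * (t k * ‖w‖) := hd
    _ = t k * (K * ‖w‖) := by ring
  exact le_of_tendsto hq.norm hbd

lemma bsub_nonempty {U : Set (E n)} (hU : IsOpen U) {f : E n → E n} {K : ℝ≥0}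
    (hK : LipschitzOnWith K f U) {u : E n} (hu : u ∈ U) : (Bsub f U u).Nonempty := by
  have hae := hK.ae_differentiableWithinAt_of_mem (μ := (volume : MeasureTheory.Measure (E n)))
  have hSc : volume {x : E n | ¬ (x ∈ U → DifferentiableWithinAt ℝ f U x)} = 0 :=
    MeasureTheory.ae_iff.1 hae
  have hdense : ∀ j : ℕ, ∃ x, x ∈ U ∧ dist x u < ((j:ℝ)+1)⁻¹ ∧ DifferentiableAt ℝ f x := by
    intro j
    set V := U ∩ Metric.ball u (((j:ℝ)+1)⁻¹) with hV
    have hVopen : IsOpen V := hU.inter Metric.isOpen_ball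
    have hVne : V.Nonempty := ⟨u, hu, by simp only [Metric.mem_ball, dist_self]; positivity⟩
    have hVpos : 0 < volume V := hVopen.measure_pos _ hVne
    have hne : (V ∩ {x : E n | x ∈ U → DifferentiableWithinAt ℝ f U x}).Nonempty := by
      by_contra hcon
      rw [not_nonempty_iff_eq_empty] at hcon
      have hsub : V ⊆ {x : E n | ¬ (x ∈ U → DifferentiableWithinAt ℝ f U x)} := by
        intro y hy hP
        have hmem : y ∈ V ∩ {x : E n | x ∈ U → DifferentiableWithinAt ℝ f U x} := ⟨hy, hP⟩
        rw [hcon] at hmem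
        exact notMem_empty y hmem
      exact absurd (MeasureTheory.measure_mono_null hsub hSc) hVpos.ne'
    obtain ⟨y, hyV, hyS⟩ := hne
    exact ⟨y, hyV.1, by simpa [Metric.mem_ball] using hyV.2,
      (hyS hyV.1).differentiableAt (hU.mem_nhds hyV.1)⟩
  choose x hxU hxd hxdiff using hdense
  have hxconv : Tendsto x atTop (𝓝 u) := by
    rw [tendsto_iff_dist_tendsto_zero]
    have h1 : Tendsto (fun j : ℕ => ((j:ℝ)+1)⁻¹) atTop (𝓝 0) :=
      tendsto_one_div_add_atTop_nhds_zero_nat.congr fun k => by rw [one_div]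
    exact tendsto_of_tendsto_of_tendsto_of_le_of_le tendsto_const_nhds h1
      (fun j => dist_nonneg) (fun j => (hxd j).le)
  have hDb : ∀ j, fderiv ℝ f (x j) ∈ Metric.closedBall (0 : E n →L[ℝ] E n) K := by
    intro j
    rw [Metric.mem_closedBall, dist_zero_right]
    exact norm_fderiv_le hU hK (hxU j) (hxdiff j).hasFDerivAt
  obtain ⟨Dl, _, φ, hφ, hDconv⟩ := (isCompact_closedBall (0 : E n →L[ℝ] E n) K).tendsto_subseq hDb
  exact ⟨Dl, x ∘ φ, fun j => ⟨hxU _, hxdiff _⟩, hxconv.comp hφ.tendsto_atTop, hDconv⟩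

end A7

instance instContSMulE2 {n : ℕ} : ContinuousSMul ℝ (E2 n) := IsBoundedSMul.continuousSMul

section A8
variable {n : ℕ} {F : E n → Set (E n)} {zb : E2 n} {Φ Ψ : E2 n → E2 n} {W : Set (E2 n)}
  {U : Set (E n)} {f : E n → E n} {K : ℝ≥0}

lemma hasFDerivAt_of_contDiffOn {g : E2 n → E2 n} {S : Set (E2 n)} (hS : IsOpen S)
    (hg : ContDiffOn ℝ 1 g S) {z : E2 n} (hz : z ∈ S) : HasFDerivAt g (fderiv ℝ g z) z :=
  ((hg.differentiableOn one_ne_zero z hz).differentiableAt (hS.mem_nhds hz)).hasFDerivAt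

namespace GraphLipWith
variable (hgl : GraphLipWith F zb Φ Ψ W U f K)
include hgl

lemma hW : IsOpen W := hgl.1
lemma hΦc : ContDiffOn ℝ 1 Φ W := hgl.2.2.1
lemma hΦWo : IsOpen (Φ '' W) := hgl.2.2.2.2.1
lemma hΨc : ContDiffOn ℝ 1 Ψ (Φ '' W) := hgl.2.2.2.2.2.1
lemma hLIO : Set.LeftInvOn Ψ Φ W := hgl.2.2.2.2.2.2.1
lemma hUo : IsOpen U := hgl.2.2.2.2.2.2.2.1
lemma hLip : LipschitzOnWith K f U := hgl.2.2.2.2.2.2.2.2.1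
lemma hGf : Φ '' (gph F ∩ W) = Gf U f := hgl.2.2.2.2.2.2.2.2.2

lemma dPhi {z : E2 n} (hz : z ∈ W) : HasFDerivAt Φ (fderiv ℝ Φ z) z :=
  hasFDerivAt_of_contDiffOn hgl.hW hgl.hΦc hz

lemma dPsi {z : E2 n} (hz : z ∈ W) : HasFDerivAt Ψ (fderiv ℝ Ψ (Φ z)) (Φ z) :=
  hasFDerivAt_of_contDiffOn hgl.hΦWo hgl.hΨc ⟨z, hz, rfl⟩

lemma inv1 {z : E2 n} (hz : z ∈ W) : ∀ x, fderiv ℝ Ψ (Φ z) (fderiv ℝ Φ z x) = x := by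
  have hcomp : HasFDerivAt (Ψ ∘ Φ) ((fderiv ℝ Ψ (Φ z)).comp (fderiv ℝ Φ z)) z :=
    (hgl.dPsi hz).comp z (hgl.dPhi hz)
  have heq : Ψ ∘ Φ =ᶠ[𝓝 z] id := by
    filter_upwards [hgl.hW.mem_nhds hz] with w hw
    exact hgl.hLIO hw
  have hid : HasFDerivAt (Ψ ∘ Φ) (ContinuousLinearMap.id ℝ (E2 n)) z :=
    (hasFDerivAt_id z).congr_of_eventuallyEq heq
  have := hcomp.unique hid
  intro x
  have hc := congrArg (fun T : E2 n →L[ℝ] E2 n => T x) this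
  simpa using hc

lemma inv2 {z : E2 n} (hz : z ∈ W) : ∀ x, fderiv ℝ Φ z (fderiv ℝ Ψ (Φ z) x) = x := by
  have h1 := hgl.inv1 hz
  set A := fderiv ℝ Φ z
  set Ai := fderiv ℝ Ψ (Φ z)
  have hinj : Function.Injective A.toLinearMap := by
    intro a b hab
    have := congrArg Ai hab
    simpa [h1] using this
  have hsurj : Function.Surjective A.toLinearMap :=
    (LinearMap.injective_iff_surjective).1 hinj
  intro x
  obtain ⟨y, hy⟩ := hsurj x
  have hyx : (A : E2 n →ₗ[ℝ] E2 n) y = x := hy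
  rw [← hyx]
  show A (Ai (A y)) = A y
  rw [h1 y]

lemma PhizGf {z : E2 n} (hz : z ∈ gph F) (hzW : z ∈ W) : Φ z ∈ Gf U f := by
  rw [← hgl.hGf]; exact ⟨z, ⟨hz, hzW⟩, rfl⟩

lemma uMem {z : E2 n} (hz : z ∈ gph F) (hzW : z ∈ W) : fst2 (Φ z) ∈ U :=
  (hgl.PhizGf hz hzW).1

lemma PhizEq {z : E2 n} (hz : z ∈ gph F) (hzW : z ∈ W) :
    Φ z = mk2 (fst2 (Φ z)) (f (fst2 (Φ z))) :=
  mk2_ext rfl (hgl.PhizGf hz hzW).2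

lemma tcone_image {z : E2 n} (hz : z ∈ gph F) (hzW : z ∈ W) :
    (fderiv ℝ Φ z) '' tcone (gph F) z = tcone (Gf U f) (Φ z) := by
  rw [← tcone_inter_open hgl.hW hzW (A := gph F)]
  apply Set.Subset.antisymm
  · rintro w ⟨v, hv, rfl⟩
    have := fderiv_mem_tcone_image (hgl.dPhi hzW) hv
    rwa [hgl.hGf] at this
  · intro w hw
    have hGf' : Gf U f = Φ '' (gph F ∩ W) := hgl.hGf.symm
    have hΨG : Ψ '' (Gf U f) = gph F ∩ W := by
      rw [hGf']
      exact hgl.hLIO.image_image' (Set.inter_subset_right)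
    have h2 := fderiv_mem_tcone_image (hgl.dPsi hzW) hw
    rw [hΨG] at h2
    have hzz : Ψ (Φ z) = z := hgl.hLIO hzW
    rw [hzz] at h2
    exact ⟨_, h2, hgl.inv2 hzW _⟩

lemma tcone_iff {z : E2 n} (hz : z ∈ gph F) (hzW : z ∈ W) (L : Submodule ℝ (E2 n)) :
    (Module.finrank ℝ L = n ∧ (L : Set (E2 n)) = tcone (gph F) z) ↔
    (∃ D : E n →L[ℝ] E n, HasFDerivAt f D (fst2 (Φ z)) ∧
      L = Submodule.comap ((fderiv ℝ Φ z) : E2 n →ₗ[ℝ] E2 n) (rgeIA D)) := by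
  set A := fderiv ℝ Φ z with hA
  set Ai := fderiv ℝ Ψ (Φ z) with hAi
  have h1 := hgl.inv1 hzW
  have h2 := hgl.inv2 hzW
  constructor
  · rintro ⟨hrank, hset⟩
    set M := Submodule.map (A : E2 n →ₗ[ℝ] E2 n) L with hM
    have hMset : (M : Set (E2 n)) = tcone (Gf U f) (Φ z) := by
      rw [← hgl.tcone_image hz hzW, ← hset]
      exact Submodule.map_coe _ _
    have hMrank : Module.finrank ℝ M = n := by
      set eA : E2 n ≃ₗ[ℝ] E2 n := LinearEquiv.ofLinear (A : E2 n →ₗ[ℝ] E2 n)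
        (Ai : E2 n →ₗ[ℝ] E2 n) (LinearMap.ext h2) (LinearMap.ext h1) with heA
      have : M = Submodule.map (eA : E2 n →ₗ[ℝ] E2 n) L := rfl
      rw [this, LinearEquiv.finrank_map_eq eA L, hrank]
    have hMset2 : (M : Set (E2 n)) = tcone (Gf U f) (mk2 (fst2 (Φ z)) (f (fst2 (Φ z)))) := by
      rw [hMset, ← hgl.PhizEq hz hzW]
    obtain ⟨D, hD, hMD⟩ := exists_deriv_of_tcone_subspace hgl.hUo hgl.hLip
      (hgl.uMem hz hzW) hMset2 hMrank
    refine ⟨D, hD, ?_⟩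
    rw [← hMD, hM]
    ext x
    simp only [Submodule.mem_comap, Submodule.mem_map]
    constructor
    · intro hx; exact ⟨x, hx, rfl⟩
    · rintro ⟨y, hy, hyx⟩
      have : y = x := by
        have := congrArg Ai hyx
        exact (h1 y).symm.trans (this.trans (h1 x))
      rwa [← this]
  · rintro ⟨D, hD, rfl⟩
    have htc : tcone (Gf U f) (Φ z) = (rgeIA D : Set (E2 n)) := by
      rw [hgl.PhizEq hz hzW]
      exact tcone_Gf_of_hasFDerivAt hgl.hUo (hgl.uMem hz hzW) hD
    constructor
    · exact finrank_comap_rgeIA A Ai h1 h2 D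
    · have himg := hgl.tcone_image hz hzW
      ext x
      simp only [SetLike.mem_coe, Submodule.mem_comap]
      constructor
      · intro hx
        -- A x ∈ rgeIA D, so A x ∈ tcone Gf = A '' tcone gph F
        have : (A x : E2 n) ∈ tcone (Gf U f) (Φ z) := by rw [htc]; exact hx
        rw [← himg] at this
        obtain ⟨y, hy, hyx⟩ := this
        have : y = x := by
          have := congrArg Ai hyx
          exact (h1 y).symm.trans (this.trans (h1 x))
        rwa [← this]
      · intro hx
        have : (A x : E2 n) ∈ (fderiv ℝ Φ z) '' tcone (gph F) z := ⟨x, hx, rfl⟩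
        rw [himg, htc] at this
        exact this

lemma fderivPhi_tendsto {zk : ℕ → E2 n} {z : E2 n} (hzk : ∀ k, zk k ∈ W) (hz : z ∈ W)
    (hconv : Tendsto zk atTop (𝓝 z)) :
    Tendsto (fun k => fderiv ℝ Φ (zk k)) atTop (𝓝 (fderiv ℝ Φ z)) := by
  have hcont : ContinuousOn (fderiv ℝ Φ) W :=
    hgl.hΦc.continuousOn_fderiv_of_isOpen hgl.hW le_rfl
  have hconv' : Tendsto zk atTop (𝓝[W] z) :=
    tendsto_nhdsWithin_iff.2 ⟨hconv, Filter.Eventually.of_forall hzk⟩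
  exact ((hcont z hz).tendsto).comp hconv'

lemma PhiCont {z : E2 n} (hz : z ∈ W) : ContinuousAt Φ z :=
  (hgl.hΦc.continuousOn.continuousAt (hgl.hW.mem_nhds hz))

lemma fderivPsi_tendsto {zk : ℕ → E2 n} {z : E2 n} (hzk : ∀ k, zk k ∈ W) (hz : z ∈ W)
    (hconv : Tendsto zk atTop (𝓝 z)) :
    Tendsto (fun k => fderiv ℝ Ψ (Φ (zk k))) atTop (𝓝 (fderiv ℝ Ψ (Φ z))) := by
  have hcont : ContinuousOn (fderiv ℝ Ψ) (Φ '' W) :=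
    hgl.hΨc.continuousOn_fderiv_of_isOpen hgl.hΦWo le_rfl
  have hPhiconv : Tendsto (fun k => Φ (zk k)) atTop (𝓝[Φ '' W] (Φ z)) := by
    refine tendsto_nhdsWithin_iff.2 ⟨(hgl.PhiCont hz).tendsto.comp hconv,
      Filter.Eventually.of_forall fun k => ⟨zk k, hzk k, rfl⟩⟩
  exact ((hcont (Φ z) ⟨z, hz, rfl⟩).tendsto).comp hPhiconv

end GraphLipWith

/-- `gmCLM` depends continuously on the matrix. -/
lemma gmCLM_tendsto {Bk : ℕ → (E n →L[ℝ] E n)} {B : E n →L[ℝ] E n}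
    (hB : Tendsto Bk atTop (𝓝 B)) : Tendsto (fun k => gmCLM (Bk k)) atTop (𝓝 (gmCLM B)) := by
  set ι1 : E n →L[ℝ] E2 n := LinearMap.toContinuousLinearMap
    ((lp2 n).symm.toLinearMap.comp (LinearMap.prod LinearMap.id 0)) with hι1
  set ι2 : E n →L[ℝ] E2 n := LinearMap.toContinuousLinearMap
    ((lp2 n).symm.toLinearMap.comp (LinearMap.prod 0 LinearMap.id)) with hι2
  have hgm : ∀ C : E n →L[ℝ] E n, gmCLM C = ι1 + ι2.comp C := by
    intro C
    refine ContinuousLinearMap.ext fun p => ?_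
    show mk2 p (C p) = ι1 p + ι2 (C p)
    have h1 : ι1 p = mk2 p 0 := rfl
    have h2 : ι2 (C p) = mk2 0 (C p) := rfl
    rw [h1, h2]
    exact mk2_ext (by simp) (by simp)
  have hbil : Continuous (fun q : (E n →L[ℝ] E2 n) × (E n →L[ℝ] E n) => q.1.comp q.2) :=
    isBoundedBilinearMap_comp.continuous
  have hcomp : Tendsto (fun k => ι2.comp (Bk k)) atTop (𝓝 (ι2.comp B)) :=
    (hbil.tendsto _).comp (tendsto_const_nhds.prodMk_nhds hB)
  have hfin := (tendsto_const_nhds (x := ι1)).add hcomp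
  rw [← hgm B] at hfin
  exact hfin.congr fun k => (hgm (Bk k)).symm

end A8

section A9
variable {n : ℕ} {F : E n → Set (E n)} {zb : E2 n} {Φ Ψ : E2 n → E2 n} {W : Set (E2 n)}
  {U : Set (E n)} {f : E n → E n} {K : ℝ≥0}

lemma tendsto_dZ_comap
    {Ak : ℕ → (E2 n →L[ℝ] E2 n)} {A : E2 n →L[ℝ] E2 n}
    {Aik : ℕ → (E2 n →L[ℝ] E2 n)} {Ai : E2 n →L[ℝ] E2 n}
    (h1k : ∀ k x, Aik k (Ak k x) = x) (h2k : ∀ k x, Ak k (Aik k x) = x)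
    (h1 : ∀ x, Ai (A x) = x) (h2 : ∀ x, A (Ai x) = x)
    (hAik : Tendsto Aik atTop (𝓝 Ai))
    {Bk : ℕ → (E n →L[ℝ] E n)} {B : E n →L[ℝ] E n} (hB : Tendsto Bk atTop (𝓝 B)) :
    Tendsto (fun k => dZ (Submodule.comap ((Ak k) : E2 n →ₗ[ℝ] E2 n) (rgeIA (Bk k)))
      (Submodule.comap (A : E2 n →ₗ[ℝ] E2 n) (rgeIA B))) atTop (𝓝 0) := by
  have hZ : Tendsto (fun k => (Aik k).comp (gmCLM (Bk k))) atTop (𝓝 (Ai.comp (gmCLM B))) := by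
    have hbil : Continuous (fun q : (E2 n →L[ℝ] E2 n) × (E n →L[ℝ] E2 n) => q.1.comp q.2) :=
      isBoundedBilinearMap_comp.continuous
    exact (hbil.tendsto _).comp (hAik.prodMk_nhds (gmCLM_tendsto hB))
  apply tendsto_dZ_zero
  exact tendsto_projC_range hZ (fun k => comap_inj _ _ (h2k k) _) (comap_inj _ _ h2 _)
    (fun k x => mem_comap_iff _ _ (h1k k) (h2k k) _ x) (fun x => mem_comap_iff _ _ h1 h2 _ x)

lemma sp_eq (hgl : GraphLipWith F zb Φ Ψ W U f K) {z : E2 n} (hz : z ∈ gph F) (hzW : z ∈ W) :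
    Sp F z = {L | ∃ B ∈ Bsub f U (fst2 (Φ z)),
      L = Submodule.comap ((fderiv ℝ Φ z) : E2 n →ₗ[ℝ] E2 n) (rgeIA B)} := by
  have h1 := hgl.inv1 hzW
  have h2 := hgl.inv2 hzW
  ext L
  constructor
  · rintro ⟨hrankL, zk0, Lk0, hk0, hconv0, hdZ0⟩
    obtain ⟨N, hN⟩ := eventually_atTop.1 (hconv0.eventually (hgl.hW.eventually_mem hzW))
    set zk : ℕ → E2 n := fun k => zk0 (k + N) with hzk
    set Lk : ℕ → Submodule ℝ (E2 n) := fun k => Lk0 (k + N) with hLk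
    have hk : ∀ k, zk k ∈ gph F ∧ Module.finrank ℝ (Lk k) = n ∧
        ((Lk k : Set (E2 n)) = tcone (gph F) (zk k)) := fun k => hk0 (k + N)
    have hzkW : ∀ k, zk k ∈ W := fun k => hN _ (Nat.le_add_left N k)
    have hconv : Tendsto zk atTop (𝓝 z) := hconv0.comp (tendsto_add_atTop_nat N)
    have hdZ : Tendsto (fun k => dZ (Lk k) L) atTop (𝓝 0) :=
      hdZ0.comp (tendsto_add_atTop_nat N)
    have hchar : ∀ k, ∃ D : E n →L[ℝ] E n, HasFDerivAt f D (fst2 (Φ (zk k))) ∧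
        Lk k = Submodule.comap ((fderiv ℝ Φ (zk k)) : E2 n →ₗ[ℝ] E2 n) (rgeIA D) :=
      fun k => (hgl.tcone_iff (hk k).1 (hzkW k) (Lk k)).1 ⟨(hk k).2.1, (hk k).2.2⟩
    choose D hD hLD using hchar
    have hDb : ∀ k, D k ∈ Metric.closedBall (0 : E n →L[ℝ] E n) K := by
      intro k
      rw [Metric.mem_closedBall, dist_zero_right]
      exact norm_fderiv_le hgl.hUo hgl.hLip (hgl.uMem (hk k).1 (hzkW k)) (hD k)
    obtain ⟨B, _, φ, hφ, hDconv⟩ :=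
      (isCompact_closedBall (0 : E n →L[ℝ] E n) K).tendsto_subseq hDb
    have hconvφ : Tendsto (fun j => zk (φ j)) atTop (𝓝 z) := hconv.comp hφ.tendsto_atTop
    have hzkWφ : ∀ j, zk (φ j) ∈ W := fun j => hzkW (φ j)
    have hAik : Tendsto (fun j => fderiv ℝ Ψ (Φ (zk (φ j)))) atTop
        (𝓝 (fderiv ℝ Ψ (Φ z))) := hgl.fderivPsi_tendsto hzkWφ hzW hconvφ
    have hdZ2 : Tendsto (fun j => dZ (Lk (φ j))
        (Submodule.comap ((fderiv ℝ Φ z) : E2 n →ₗ[ℝ] E2 n) (rgeIA B))) atTop (𝓝 0) := by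
      have := tendsto_dZ_comap (Ak := fun j => fderiv ℝ Φ (zk (φ j)))
        (Aik := fun j => fderiv ℝ Ψ (Φ (zk (φ j))))
        (fun j => hgl.inv1 (hzkWφ j)) (fun j => hgl.inv2 (hzkWφ j)) h1 h2 hAik hDconv
      refine this.congr fun j => ?_
      show dZ (Submodule.comap ((fderiv ℝ Φ (zk (φ j))) : E2 n →ₗ[ℝ] E2 n) (rgeIA (D (φ j))))
          (Submodule.comap ((fderiv ℝ Φ z) : E2 n →ₗ[ℝ] E2 n) (rgeIA B)) =
          dZ (Lk (φ j)) (Submodule.comap ((fderiv ℝ Φ z) : E2 n →ₗ[ℝ] E2 n) (rgeIA B))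
      rw [← hLD (φ j)]
    have hLeq : L = Submodule.comap ((fderiv ℝ Φ z) : E2 n →ₗ[ℝ] E2 n) (rgeIA B) :=
      dZ_lim_unique (hdZ.comp hφ.tendsto_atTop) hdZ2
    refine ⟨B, ⟨fun j => fst2 (Φ (zk (φ j))), fun j => ⟨hgl.uMem (hk (φ j)).1 (hzkWφ j),
      (hD (φ j)).differentiableAt⟩, ?_, ?_⟩, hLeq⟩
    · exact (continuous_fst2.tendsto _).comp (((hgl.PhiCont hzW).tendsto).comp hconvφ)
    · exact hDconv.congr fun j => ((hD (φ j)).fderiv).symm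
  · rintro ⟨B, ⟨xk, hxk, hxconv, hDconv⟩, rfl⟩
    have hGmem : ∀ k, mk2 (xk k) (f (xk k)) ∈ Gf U f := by
      intro k
      exact ⟨by simpa using (hxk k).1, by simp⟩
    have hGmem' : ∀ k, mk2 (xk k) (f (xk k)) ∈ Φ '' (gph F ∩ W) := by
      intro k
      rw [hgl.hGf]
      exact hGmem k
    choose zk hzkmem hzkeq using hGmem'
    have hfst : ∀ k, fst2 (Φ (zk k)) = xk k := fun k => by rw [hzkeq k]; simp
    have hzkconv : Tendsto zk atTop (𝓝 z) := by
      have hfc : ContinuousAt f (fst2 (Φ z)) :=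
        hgl.hLip.continuousOn.continuousAt (hgl.hUo.mem_nhds (hgl.uMem hz hzW))
      have hmk : Tendsto (fun k => mk2 (xk k) (f (xk k))) atTop (𝓝 (Φ z)) := by
        have hpair : Tendsto (fun k => (xk k, f (xk k))) atTop
            (𝓝 (fst2 (Φ z), f (fst2 (Φ z)))) :=
          hxconv.prodMk_nhds (hfc.tendsto.comp hxconv)
        have := (continuous_mk2.tendsto _).comp hpair
        rwa [← hgl.PhizEq hz hzW] at this
      have hΨct : ContinuousAt Ψ (Φ z) :=
        hgl.hΨc.continuousOn.continuousAt (hgl.hΦWo.mem_nhds ⟨z, hzW, rfl⟩)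
      have hfin := (hΨct.tendsto).comp hmk
      rw [hgl.hLIO hzW] at hfin
      refine hfin.congr fun k => ?_
      show Ψ (mk2 (xk k) (f (xk k))) = zk k
      rw [← hzkeq k, hgl.hLIO (hzkmem k).2]
    set Dk : ℕ → (E n →L[ℝ] E n) := fun k => fderiv ℝ f (xk k) with hDk
    have hDfk : ∀ k, HasFDerivAt f (Dk k) (fst2 (Φ (zk k))) := by
      intro k
      rw [hfst k]
      exact (hxk k).2.hasFDerivAt
    set Lk : ℕ → Submodule ℝ (E2 n) := fun k =>
      Submodule.comap ((fderiv ℝ Φ (zk k)) : E2 n →ₗ[ℝ] E2 n) (rgeIA (Dk k)) with hLkdef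
    have hLkprop : ∀ k, Module.finrank ℝ (Lk k) = n ∧
        ((Lk k : Set (E2 n)) = tcone (gph F) (zk k)) :=
      fun k => (hgl.tcone_iff (hzkmem k).1 (hzkmem k).2 (Lk k)).2 ⟨Dk k, hDfk k, rfl⟩
    have hAik : Tendsto (fun k => fderiv ℝ Ψ (Φ (zk k))) atTop (𝓝 (fderiv ℝ Ψ (Φ z))) :=
      hgl.fderivPsi_tendsto (fun k => (hzkmem k).2) hzW hzkconv
    have hdZ : Tendsto (fun k => dZ (Lk k)
        (Submodule.comap ((fderiv ℝ Φ z) : E2 n →ₗ[ℝ] E2 n) (rgeIA B))) atTop (𝓝 0) :=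
      tendsto_dZ_comap (fun k => hgl.inv1 (hzkmem k).2) (fun k => hgl.inv2 (hzkmem k).2)
        h1 h2 hAik hDconv
    exact ⟨finrank_comap_rgeIA _ _ h1 h2 B, zk, Lk,
      fun k => ⟨(hzkmem k).1, (hLkprop k).1, (hLkprop k).2⟩, hzkconv, hdZ⟩

open ContinuousLinearMap in
lemma spstar_eq (hgl : GraphLipWith F zb Φ Ψ W U f K) {z : E2 n} (hz : z ∈ gph F)
    (hzW : z ∈ W) :
    SpStar F z = {L | ∃ B ∈ Bsub f U (fst2 (Φ z)),
      L = Submodule.map ((Sneg n).toLinearMap ∘ₗ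
        (ContinuousLinearMap.adjoint (fderiv ℝ Φ z)).toLinearMap ∘ₗ
        (Sneg n).symm.toLinearMap) (rgeIA (ContinuousLinearMap.adjoint B))} := by
  have h1 := hgl.inv1 hzW
  have h2 := hgl.inv2 hzW
  ext L'
  constructor
  · rintro ⟨L, hL, rfl⟩
    rw [sp_eq hgl hz hzW] at hL
    obtain ⟨B, hB, rfl⟩ := hL
    exact ⟨B, hB, adjS_comap _ _ h1 h2 B⟩
  · rintro ⟨B, hB, rfl⟩
    refine ⟨Submodule.comap ((fderiv ℝ Φ z) : E2 n →ₗ[ℝ] E2 n) (rgeIA B), ?_, ?_⟩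
    · rw [sp_eq hgl hz hzW]
      exact ⟨B, hB, rfl⟩
    · exact (adjS_comap _ _ h1 h2 B).symm

end A9


/- STATEMENT 9 -/
theorem stmt9 (n : ℕ) (F : E n → Set (E n)) (zb : E2 n) (hzb : zb ∈ gph F)
    (Φ Ψ : E2 n → E2 n) (W : Set (E2 n)) (U : Set (E n)) (f : E n → E n) (K : ℝ≥0)
    (hgl : GraphLipWith F zb Φ Ψ W U f K) :
    SCDAround F zb ∧ ∃ δ > (0 : ℝ), ∀ z ∈ gph F, dist z zb < δ →
      (Sp F z = {L | ∃ B ∈ Bsub f U (fst2 (Φ z)),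
          L = Submodule.comap ((fderiv ℝ Φ z) : E2 n →ₗ[ℝ] E2 n) (rgeIA B)} ∧
       SpStar F z = {L | ∃ B ∈ Bsub f U (fst2 (Φ z)),
          L = Submodule.map ((Sneg n).toLinearMap ∘ₗ
            (ContinuousLinearMap.adjoint (fderiv ℝ Φ z)).toLinearMap ∘ₗ
            (Sneg n).symm.toLinearMap) (rgeIA (ContinuousLinearMap.adjoint B))}) := by
  obtain ⟨δ, hδpos, hball⟩ := Metric.isOpen_iff.1 hgl.hW zb hgl.2.1
  have hzW : ∀ z : E2 n, dist z zb < δ → z ∈ W := fun z hd => hball (Metric.mem_ball.2 hd)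
  constructor
  · refine ⟨δ, hδpos, fun z' hz' hd' => ?_⟩
    obtain ⟨B, hB⟩ := bsub_nonempty hgl.hUo hgl.hLip (hgl.uMem hz' (hzW _ hd'))
    refine ⟨Submodule.comap ((fderiv ℝ Φ z') : E2 n →ₗ[ℝ] E2 n) (rgeIA B), ?_⟩
    rw [sp_eq hgl hz' (hzW _ hd')]
    exact ⟨B, hB, rfl⟩
  · exact ⟨δ, hδpos, fun z hzg hd => ⟨sp_eq hgl hzg (hzW z hd), spstar_eq hgl hzg (hzW z hd)⟩⟩

end SCD
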